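/- Let L be a CY-type operator of degree n+1 with all exponents 0 at z=0 and flag y_k = Σ_{j≤k} ln(z)^j f_{k−j}/j! with f_0(0)=1, f_1,…,f_n ∈ z·ℚ⟦z⟧. If the first Y-invariant condition Y₁ = 1 holds, i.e. ϑ( ϑ(y₂/y₀) / ϑ(y₁/y₀) ) = ϑ(y₁/y₀), then y₀·y₂ − (1/2)·y₁² = 0. -/

import Mathlib

open Polynomial

/-- The Euler operator `ϑ = z d/dz` on `ℚ⟦z⟧`. -/
noncomputable def thetaPS (g : PowerSeries ℚ) : PowerSeries ℚ :=
  PowerSeries.mk fun m => (m : ℚ) * PowerSeries.coeff m g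

/-- The Euler operator `ϑ = z d/dz` on `ℚ⟦z⟧[ln z]` (polynomials in `X = ln z` over
`ℚ⟦z⟧`), acting by `ϑ(g (ln z)^j) = ϑ(g)(ln z)^j + j g (ln z)^{j-1}`. -/
noncomputable def thetaL (p : Polynomial (PowerSeries ℚ)) : Polynomial (PowerSeries ℚ) :=
  ∑ j ∈ Finset.range (p.natDegree + 1),
    (Polynomial.C (thetaPS (p.coeff j)) * Polynomial.X ^ j +
      Polynomial.C ((j : ℚ) • p.coeff j) * Polynomial.X ^ (j - 1))

/-- The flag `y_k = Σ_{j=0}^k (1/j!) (ln z)^j f_{k−j}` in `ℚ⟦z⟧[ln z]`. -/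
noncomputable def flag (f : ℕ → PowerSeries ℚ) (k : ℕ) : Polynomial (PowerSeries ℚ) :=
  ∑ j ∈ Finset.range (k + 1),
    ((j.factorial : ℚ)⁻¹) • (Polynomial.C (f (k - j)) * Polynomial.X ^ j)

/-! ### Auxiliary lemmas about `thetaPS` -/

lemma thetaPS_coeff (g : PowerSeries ℚ) (m : ℕ) :
    PowerSeries.coeff m (thetaPS g) = (m : ℚ) * PowerSeries.coeff m g := by
  simp [thetaPS]

lemma thetaPS_const (q : ℚ) : thetaPS (PowerSeries.C q) = 0 := by
  ext m
  simp [thetaPS_coeff, PowerSeries.coeff_C]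
  rintro rfl; simp

lemma thetaPS_one : thetaPS 1 = 0 := by
  simpa using thetaPS_const 1

lemma thetaPS_add (g h : PowerSeries ℚ) : thetaPS (g + h) = thetaPS g + thetaPS h := by
  ext m; simp [thetaPS_coeff, mul_add]

lemma thetaPS_constantCoeff (g : PowerSeries ℚ) :
    PowerSeries.constantCoeff (thetaPS g) = 0 := by
  have := thetaPS_coeff g 0
  simpa using this

lemma thetaPS_mul (p q : PowerSeries ℚ) :
    thetaPS (p * q) = p * thetaPS q + thetaPS p * q := by
  ext m
  rw [thetaPS_coeff, map_add, PowerSeries.coeff_mul, PowerSeries.coeff_mul,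
    PowerSeries.coeff_mul, Finset.mul_sum, ← Finset.sum_add_distrib]
  apply Finset.sum_congr rfl
  intro x hx
  rw [Finset.HasAntidiagonal.mem_antidiagonal] at hx
  rw [thetaPS_coeff, thetaPS_coeff, ← hx]
  push_cast
  ring

lemma eq_of_theta_eq {x y : PowerSeries ℚ} (h : thetaPS x = thetaPS y)
    (h0 : PowerSeries.constantCoeff x = PowerSeries.constantCoeff y) : x = y := by
  ext m
  cases m with
  | zero => simpa [PowerSeries.coeff_zero_eq_constantCoeff] using h0
  | succ m =>
    have := congrArg (PowerSeries.coeff (m+1)) h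
    rw [thetaPS_coeff, thetaPS_coeff] at this
    have hm : ((m:ℚ)+1) ≠ 0 := by positivity
    push_cast at this
    exact mul_left_cancel₀ hm this

/-! ### Auxiliary lemmas about `thetaL` -/

lemma thetaL_linear (a : PowerSeries ℚ) :
    thetaL (X + C a) = C (thetaPS a + 1) := by
  rw [thetaL, natDegree_X_add_C]
  rw [Finset.sum_range_succ, Finset.sum_range_one]
  simp [thetaPS_one, thetaPS_add]

lemma thetaL_quad (c b a : PowerSeries ℚ) (hc : c ≠ 0) :
    thetaL (C c * X ^ 2 + C b * X + C a) =
      C (thetaPS c) * X ^ 2 + C ((2:ℚ) • c + thetaPS b) * X + C (b + thetaPS a) := by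
  rw [thetaL, natDegree_quadratic hc]
  rw [Finset.sum_range_succ, Finset.sum_range_succ, Finset.sum_range_one]
  simp [thetaPS_add]
  ring

/-! ### Auxiliary lemmas about `flag` -/

lemma flag0 (f : ℕ → PowerSeries ℚ) : flag f 0 = C (f 0) := by
  simp [flag]

lemma flag1 (f : ℕ → PowerSeries ℚ) : flag f 1 = C (f 1) + C (f 0) * X := by
  rw [flag, Finset.sum_range_succ, Finset.sum_range_one]
  simp

/-- The constant `1/2` as a power series. -/
noncomputable def c2 : PowerSeries ℚ := algebraMap ℚ (PowerSeries ℚ) (2⁻¹ : ℚ)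

lemma c2_eq : c2 = PowerSeries.C (2⁻¹ : ℚ) := rfl

lemma c2_ne_zero : c2 ≠ 0 := by
  rw [c2_eq]
  intro h
  have := congrArg (PowerSeries.constantCoeff) h
  simp at this

lemma c2_add_c2 : c2 + c2 = 1 := by
  rw [c2, ← map_add]
  norm_num

lemma exists_unit_cancel {M : Type*} [CommMonoid M] {u : M} (hu : IsUnit u) (x : M) :
    ∃ g, u * g = x := by
  obtain ⟨v, hv⟩ := hu
  exact ⟨↑v⁻¹ * x, by rw [← hv, ← mul_assoc, Units.mul_inv, one_mul]⟩

lemma flag2 (f : ℕ → PowerSeries ℚ) :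
    flag f 2 = C c2 * C (f 0) * X ^ 2 + C (f 1) * X + C (f 2) := by
  rw [flag, Finset.sum_range_succ, Finset.sum_range_succ, Finset.sum_range_one]
  simp [Nat.factorial]
  rw [Algebra.smul_def, Polynomial.algebraMap_apply, ← c2]
  ring

set_option maxHeartbeats 1000000 in
/-- Let `y_0, y_1, y_2` be a flag with all exponents `0` at `z = 0`
(`f_0(0) = 1`, `f_1, f_2 ∈ z ℚ⟦z⟧`).  If the first Y-invariant condition `Y₁ = 1`
holds, i.e. `ϑ(ϑ(y₂/y₀)/ϑ(y₁/y₀)) = ϑ(y₁/y₀)` (computed in the fraction field of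
`ℚ⟦z⟧[ln z]`, with `D` the extension of `ϑ`), then `y₀·y₂ − (1/2)·y₁² = 0`. -/
theorem Y1_eq_one_gives_quadratic_relation
    (f : ℕ → PowerSeries ℚ)
    (hf0u : IsUnit (f 0)) (hf0 : PowerSeries.constantCoeff (f 0) = 1)
    (hf1 : PowerSeries.constantCoeff (f 1) = 0)
    (hf2 : PowerSeries.constantCoeff (f 2) = 0)
    (D : FractionRing (Polynomial (PowerSeries ℚ)) →
         FractionRing (Polynomial (PowerSeries ℚ)))
    (hDadd : ∀ x y, D (x + y) = D x + D y)
    (hDmul : ∀ x y, D (x * y) = x * D y + D x * y)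
    (hDext : ∀ p : Polynomial (PowerSeries ℚ),
      D (algebraMap (Polynomial (PowerSeries ℚ)) _ p) =
        algebraMap (Polynomial (PowerSeries ℚ)) _ (thetaL p))
    (hY : D (D (algebraMap (Polynomial (PowerSeries ℚ)) _ (flag f 2) /
                algebraMap (Polynomial (PowerSeries ℚ)) _ (flag f 0)) /
             D (algebraMap (Polynomial (PowerSeries ℚ)) _ (flag f 1) /
                algebraMap (Polynomial (PowerSeries ℚ)) _ (flag f 0))) =
          D (algebraMap (Polynomial (PowerSeries ℚ)) _ (flag f 1) /
             algebraMap (Polynomial (PowerSeries ℚ)) _ (flag f 0))) :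
    flag f 0 * flag f 2 - (2 : ℚ)⁻¹ • (flag f 1) ^ 2 = 0 := by
  classical
  set φ := algebraMap (Polynomial (PowerSeries ℚ))
    (FractionRing (Polynomial (PowerSeries ℚ))) with hφ
  have hinj : Function.Injective φ := IsFractionRing.injective _ _
  have hφne : ∀ x : Polynomial (PowerSeries ℚ), x ≠ 0 → φ x ≠ 0 := fun x hx =>
    (map_ne_zero_iff φ hinj).mpr hx
  -- the normalized logarithmic tails
  obtain ⟨g1, hfg1⟩ := exists_unit_cancel hf0u (f 1)
  obtain ⟨g2, hfg2⟩ := exists_unit_cancel hf0u (f 2)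
  have hg1c : PowerSeries.constantCoeff g1 = 0 := by
    have := congrArg (PowerSeries.constantCoeff) hfg1
    rw [map_mul, hf0, one_mul, hf1] at this
    exact this
  have hg2c : PowerSeries.constantCoeff g2 = 0 := by
    have := congrArg (PowerSeries.constantCoeff) hfg2
    rw [map_mul, hf0, one_mul, hf2] at this
    exact this
  -- u1 = ϑ(y₁/y₀), a unit power series
  have hu1c : PowerSeries.constantCoeff (thetaPS g1 + 1) = 1 := by
    rw [map_add, thetaPS_constantCoeff, map_one, zero_add]
  have hu1 : IsUnit (thetaPS g1 + 1) := by
    rw [PowerSeries.isUnit_iff_constantCoeff, hu1c]; exact isUnit_one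
  have hu1ne : thetaPS g1 + 1 ≠ 0 := hu1.ne_zero
  obtain ⟨w, hwa⟩ := exists_unit_cancel hu1 (g1 + thetaPS g2)
  have hwc : PowerSeries.constantCoeff w = 0 := by
    have := congrArg (PowerSeries.constantCoeff) hwa
    rw [map_mul, hu1c, one_mul, map_add, hg1c, thetaPS_constantCoeff, add_zero] at this
    exact this
  -- division formulas in the fraction field
  have hf0ne : f 0 ≠ 0 := by
    intro h
    rw [h, map_zero] at hf0
    exact one_ne_zero hf0.symm
  have hC0ne : φ (C (f 0)) ≠ 0 := hφne _ (by rw [ne_eq, Polynomial.C_eq_zero]; exact hf0ne)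
  have hy1div : φ (flag f 1) / φ (flag f 0) = φ (X + C g1) := by
    have h1 : flag f 1 = flag f 0 * (X + C g1) := by
      rw [flag0, flag1, ← hfg1, map_mul]; ring
    rw [h1, flag0, map_mul, mul_div_cancel_left₀ _ hC0ne]
  have hy2div : φ (flag f 2) / φ (flag f 0) =
      φ (C c2 * X ^ 2 + C g1 * X + C g2) := by
    have h2 : flag f 2 = flag f 0 * (C c2 * X ^ 2 + C g1 * X + C g2) := by
      rw [flag0, flag2, ← hfg1, ← hfg2]
      simp only [map_mul]
      ring
    rw [h2, flag0, map_mul, mul_div_cancel_left₀ _ hC0ne]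
  -- compute the derivatives
  have hDu : D (φ (flag f 1) / φ (flag f 0)) = φ (C (thetaPS g1 + 1)) := by
    rw [hy1div, hDext, thetaL_linear]
  have hthQ : thetaL (C c2 * X ^ 2 + C g1 * X + C g2) =
      C (thetaPS g1 + 1) * (X + C w) := by
    rw [thetaL_quad _ _ _ c2_ne_zero, c2_eq, thetaPS_const]
    have h2c2 : (2:ℚ) • c2 = 1 := by
      rw [c2, Algebra.smul_def, ← map_mul]
      norm_num
    rw [← c2_eq, h2c2, mul_add, ← map_mul, hwa]
    simp only [map_zero, zero_mul, zero_add]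
    ring
  have hCu1ne : φ (C (thetaPS g1 + 1)) ≠ 0 := hφne _ (by rw [ne_eq, Polynomial.C_eq_zero]; exact hu1ne)
  have hDv : D (φ (flag f 2) / φ (flag f 0)) =
      φ (C (thetaPS g1 + 1)) * φ (X + C w) := by
    rw [hy2div, hDext, hthQ, map_mul]
  -- use the hypothesis Y₁ = 1
  rw [hDu, hDv, mul_div_cancel_left₀ _ hCu1ne, hDext, thetaL_linear] at hY
  have hCeq : thetaPS w + 1 = thetaPS g1 + 1 := Polynomial.C_injective (hinj hY)
  have hθwg : thetaPS w = thetaPS g1 := add_right_cancel hCeq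
  have hwg1 : w = g1 := eq_of_theta_eq hθwg (by rw [hwc, hg1c])
  -- extract ϑ g₂ = g₁ ϑ g₁
  have hth2 : thetaPS g2 = thetaPS g1 * g1 := by
    rw [hwg1] at hwa
    linear_combination -hwa
  -- conclude g₂ = (1/2) g₁²
  have hg2eq : g2 = c2 * (g1 * g1) := by
    apply eq_of_theta_eq
    · rw [thetaPS_mul c2 (g1 * g1), thetaPS_mul g1 g1, c2_eq, thetaPS_const, ← c2_eq,
        hth2]
      linear_combination (-(thetaPS g1 * g1)) * c2_add_c2
    · rw [hg2c, map_mul, map_mul, hg1c, mul_zero, mul_zero]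
  -- hence f₀ f₂ = (1/2) f₁²
  have hkey : f 0 * f 2 = c2 * (f 1 * f 1) := by
    rw [← hfg1, ← hfg2, hg2eq]
    ring
  -- final algebraic identity
  have hc : C c2 + C c2 = (1 : Polynomial (PowerSeries ℚ)) := by
    rw [← map_add, c2_add_c2, map_one]
  rw [flag0, flag1, flag2, Algebra.smul_def, Polynomial.algebraMap_apply, ← c2]
  have expand : C (f 0) * (C c2 * C (f 0) * X ^ 2 + C (f 1) * X + C (f 2)) -
      C c2 * (C (f 1) + C (f 0) * X) ^ 2 = C (f 0 * f 2 - c2 * (f 1 * f 1)) := by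
    simp only [map_sub, map_mul]
    linear_combination (- C (f 0) * C (f 1) * X) * hc
  rw [expand, hkey, sub_self, map_zero]
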